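/- With K analytic in r^{-1} ≤ |z| ≤ r (r > 1) and K_n its symmetrically truncated order-n Laurent expansion, the modified trapezoidal rule is exact for the Laurent monomials: T_{2n}(K_n u) = I(K u) whenever u(z) = z^k with −n+1 ≤ k ≤ n−1, and also when u(z) = z^n + z^{−n}. -/

import Mathlib

open scoped Real
open Complex intervalIntegral

/-- The modified trapezoidal rule node sum `T_{2n}(v) = (π/n) ∑_{k=1}^{2n} v(e^{πik/n})`. -/
noncomputable def trap2 (n : ℕ) (v : ℂ → ℂ) : ℂ :=
  ((π / n : ℝ) : ℂ) * ∑ k ∈ Finset.range (2 * n),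
    v (Complex.exp (π * Complex.I * ((k : ℂ) + 1) / n))

/-- Truncated symmetric Laurent expansion
`K_n(z) = (1/2)c_{−n} z^{−n} + ∑_{−n<k<n} c_k z^k + (1/2)c_n z^n`. -/
noncomputable def laurentTrunc (c : ℤ → ℂ) (n : ℕ) (z : ℂ) : ℂ :=
  (1 / 2) * c (-(n : ℤ)) * z ^ (-(n : ℤ))
    + ∑ k ∈ Finset.Ioo (-(n : ℤ)) (n : ℤ), c k * z ^ k
    + (1 / 2) * c (n : ℤ) * z ^ (n : ℤ)

lemma trap2_congr {n : ℕ} {v w : ℂ → ℂ} (h : ∀ z : ℂ, z ≠ 0 → v z = w z) :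
    trap2 n v = trap2 n w := by
  unfold trap2
  congr 1
  exact Finset.sum_congr rfl fun k _ => h _ (Complex.exp_ne_zero _)

lemma trap2_add {n : ℕ} (v w : ℂ → ℂ) :
    trap2 n (fun z => v z + w z) = trap2 n v + trap2 n w := by
  unfold trap2
  rw [Finset.sum_add_distrib]; ring

lemma trap2_smul {n : ℕ} (a : ℂ) (v : ℂ → ℂ) :
    trap2 n (fun z => a * v z) = a * trap2 n v := by
  unfold trap2
  rw [← Finset.mul_sum]; ring

lemma trap2_finsum {n : ℕ} {ι : Type*} (s : Finset ι) (f : ι → ℂ → ℂ) :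
    trap2 n (fun z => ∑ i ∈ s, f i z) = ∑ i ∈ s, trap2 n (f i) := by
  unfold trap2
  rw [Finset.sum_comm, Finset.mul_sum]

lemma sum_nodes (n : ℕ) (hn : n ≠ 0) (m : ℤ) :
    ∑ j ∈ Finset.range (2 * n), Complex.exp (π * Complex.I * ((j : ℂ) + 1) / n) ^ m
      = if ((2 * n : ℤ)) ∣ m then ((2 * n : ℕ) : ℂ) else 0 := by
  have hn' : (n : ℂ) ≠ 0 := Nat.cast_ne_zero.mpr hn
  have hπ : (π : ℝ) ≠ 0 := Real.pi_ne_zero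
  have hπc : ((π : ℝ) : ℂ) ≠ 0 := Complex.ofReal_ne_zero.mpr hπ
  set ζ := Complex.exp (π * Complex.I * m / n) with hζdef
  have hz : ∀ j ∈ Finset.range (2 * n),
      Complex.exp (π * Complex.I * ((j : ℂ) + 1) / n) ^ m = ζ ^ (j + 1) := by
    intro j _
    rw [hζdef, ← Complex.exp_int_mul, ← Complex.exp_nat_mul]
    congr 1
    push_cast
    field_simp
  rw [Finset.sum_congr rfl hz]
  have hz2n : ζ ^ (2 * n) = 1 := by
    rw [hζdef, ← Complex.exp_nat_mul]
    have h2 : ((2 * n : ℕ) : ℂ) * (π * Complex.I * m / n) = (m : ℂ) * (2 * π * Complex.I) := by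
      push_cast; field_simp
    rw [h2, Complex.exp_int_mul_two_pi_mul_I]
  by_cases hd : ((2 * n : ℤ)) ∣ m
  · obtain ⟨t, ht⟩ := hd
    have hζ1 : ζ = 1 := by
      rw [hζdef]
      have h3 : (π : ℂ) * Complex.I * m / n = (t : ℂ) * (2 * π * Complex.I) := by
        rw [ht]; push_cast; field_simp
      rw [h3, Complex.exp_int_mul_two_pi_mul_I]
    rw [if_pos ⟨t, ht⟩]
    simp [hζ1]
  · have hζ1 : ζ ≠ 1 := by
      rw [hζdef]
      intro h1
      rw [Complex.exp_eq_one_iff] at h1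
      obtain ⟨t, ht⟩ := h1
      apply hd
      refine ⟨t, ?_⟩
      have hm : (m : ℂ) = 2 * n * t := by
        field_simp at ht
        have h2 : ((π : ℝ) : ℂ) * Complex.I * m = ((π : ℝ) : ℂ) * Complex.I * (2 * n * t) := by
          linear_combination ((π : ℂ) * Complex.I) * ht
        exact mul_left_cancel₀ (mul_ne_zero hπc Complex.I_ne_zero) h2
      exact_mod_cast hm
    have hgeom : ∑ j ∈ Finset.range (2 * n), ζ ^ (j + 1)
        = ζ * ((ζ ^ (2 * n) - 1) / (ζ - 1)) := by
      rw [← geom_sum_eq hζ1, Finset.mul_sum]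
      exact Finset.sum_congr rfl fun j _ => (pow_succ' ζ j)
    rw [if_neg hd, hgeom, hz2n]
    simp

lemma trap2_zpow (n : ℕ) (hn : n ≠ 0) (m : ℤ) :
    trap2 n (fun z => z ^ m) = if ((2 * n : ℤ)) ∣ m then ((2 * π : ℝ) : ℂ) else 0 := by
  have hn' : (n : ℂ) ≠ 0 := Nat.cast_ne_zero.mpr hn
  unfold trap2
  rw [sum_nodes n hn m]
  split_ifs
  · push_cast
    field_simp
  · simp

lemma trap2_laurent (c : ℤ → ℂ) (n : ℕ) (hn : n ≠ 0) (j : ℤ) :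
    trap2 n (fun z => laurentTrunc c n z * z ^ j)
      = ((1 / 2) * c (-(n : ℤ)) * (if ((2 * n : ℤ)) ∣ (-(n : ℤ) + j) then ((2 * π : ℝ) : ℂ) else 0)
          + ∑ m ∈ Finset.Ioo (-(n : ℤ)) (n : ℤ),
              c m * (if ((2 * n : ℤ)) ∣ (m + j) then ((2 * π : ℝ) : ℂ) else 0))
        + (1 / 2) * c (n : ℤ) * (if ((2 * n : ℤ)) ∣ ((n : ℤ) + j) then ((2 * π : ℝ) : ℂ) else 0) := by
  have step : trap2 n (fun z => laurentTrunc c n z * z ^ j)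
      = trap2 n (fun z =>
          ((1 / 2) * c (-(n : ℤ)) * z ^ (-(n : ℤ) + j)
            + ∑ m ∈ Finset.Ioo (-(n : ℤ)) (n : ℤ), c m * z ^ (m + j))
          + (1 / 2) * c (n : ℤ) * z ^ ((n : ℤ) + j)) := by
    apply trap2_congr
    intro z hz
    simp only [laurentTrunc, add_mul, Finset.sum_mul, mul_assoc, ← zpow_add₀ hz]
  rw [step, trap2_add, trap2_add, trap2_smul, trap2_smul, trap2_finsum,
    trap2_zpow n hn, trap2_zpow n hn]
  congr 2
  exact Finset.sum_congr rfl fun m _ => by rw [trap2_smul, trap2_zpow n hn]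

/-- the modified trapezoidal rule is exact for Laurent monomials
`u(z) = z^k`, `−n+1 ≤ k ≤ n−1`, and for `u(z) = z^n + z^{−n}`. -/
theorem modified_trapezoidal_exactness
    (r : ℝ) (hr : 1 < r) (K : ℂ → ℂ)
    (hK : AnalyticOnNhd ℂ K {z : ℂ | r⁻¹ ≤ ‖z‖ ∧ ‖z‖ ≤ r})
    (c : ℤ → ℂ)
    (hc : ∀ k : ℤ, c k = (1 / (2 * π)) *
      ∫ t in (0:ℝ)..(2 * π),
        K (Complex.exp (Complex.I * t)) * Complex.exp (-Complex.I * k * t))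
    (n : ℕ) (hn : 1 ≤ n) :
    (∀ k : ℤ, -(n : ℤ) + 1 ≤ k → k ≤ (n : ℤ) - 1 →
      trap2 n (fun z => laurentTrunc c n z * z ^ k)
        = ∫ t in (0:ℝ)..(2 * π),
            K (Complex.exp (Complex.I * t)) * Complex.exp (Complex.I * t) ^ k) ∧
    trap2 n (fun z => laurentTrunc c n z * (z ^ (n : ℤ) + z ^ (-(n : ℤ))))
      = ∫ t in (0:ℝ)..(2 * π),
          K (Complex.exp (Complex.I * t)) *
            (Complex.exp (Complex.I * t) ^ (n : ℤ)
              + Complex.exp (Complex.I * t) ^ (-(n : ℤ))) := by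
  have hn0 : n ≠ 0 := by omega
  have hπ : (π : ℝ) ≠ 0 := Real.pi_ne_zero
  have hπc : ((π : ℝ) : ℂ) ≠ 0 := Complex.ofReal_ne_zero.mpr hπ
  have hndvd : ∀ t : ℤ, t ≠ 0 → |t| < 2 * (n : ℤ) → ¬ ((2 * (n : ℤ)) ∣ t) := by
    intro t ht hlt hdvd
    have h1 : (2 * (n : ℤ)) ∣ |t| := (dvd_abs _ _).mpr hdvd
    have h2 := Int.le_of_dvd (abs_pos.mpr ht) h1
    exact absurd hlt (not_lt.mpr h2)
  -- the key integral computation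
  have key : ∀ m : ℤ,
      (∫ t in (0:ℝ)..(2 * π),
        K (Complex.exp (Complex.I * t)) * Complex.exp (Complex.I * t) ^ m)
      = ((2 * π : ℝ) : ℂ) * c (-m) := by
    intro m
    have h := hc (-m)
    have h2 : (∫ t in (0:ℝ)..(2 * π),
          K (Complex.exp (Complex.I * t)) * Complex.exp (-Complex.I * ((-m : ℤ) : ℂ) * t))
        = ∫ t in (0:ℝ)..(2 * π),
          K (Complex.exp (Complex.I * t)) * Complex.exp (Complex.I * t) ^ m := by
      apply intervalIntegral.integral_congr
      intro t _
      dsimp only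
      congr 1
      rw [← Complex.exp_int_mul]
      congr 1
      push_cast
      ring
    rw [h, h2]
    field_simp
    push_cast; ring
  constructor
  · intro k hk1 hk2
    rw [trap2_laurent c n hn0 k, key k]
    rw [if_neg (hndvd _ (by omega) (by rw [abs_lt]; omega)),
      if_neg (hndvd _ (by omega) (by rw [abs_lt]; omega))]
    have hmem : -k ∈ Finset.Ioo (-(n : ℤ)) (n : ℤ) := by
      rw [Finset.mem_Ioo]; omega
    rw [Finset.sum_eq_single_of_mem (-k) hmem
      (fun m hm hne => by
        rw [Finset.mem_Ioo] at hm
        rw [if_neg (hndvd _ (by omega) (by rw [abs_lt]; omega)), mul_zero])]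
    rw [if_pos (by rw [neg_add_cancel]; exact dvd_zero _)]
    ring
  · have hsp : (fun z : ℂ => laurentTrunc c n z * (z ^ (n : ℤ) + z ^ (-(n : ℤ))))
        = fun z => laurentTrunc c n z * z ^ (n : ℤ) + laurentTrunc c n z * z ^ (-(n : ℤ)) :=
      funext fun z => mul_add _ _ _
    rw [hsp, trap2_add, trap2_laurent c n hn0 (n : ℤ), trap2_laurent c n hn0 (-(n : ℤ))]
    rw [if_pos (by rw [neg_add_cancel]; exact dvd_zero _),
      if_pos (show (2 * (n:ℤ)) ∣ ((n:ℤ) + n) from ⟨1, by ring⟩),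
      if_pos (show (2 * (n:ℤ)) ∣ (-(n:ℤ) + -(n:ℤ)) from ⟨-1, by ring⟩),
      if_pos (by rw [add_neg_cancel]; exact dvd_zero _)]
    rw [Finset.sum_eq_zero (fun m hm => by
        rw [Finset.mem_Ioo] at hm
        rw [if_neg (hndvd _ (by omega) (by rw [abs_lt]; omega)), mul_zero]),
      Finset.sum_eq_zero (fun m hm => by
        rw [Finset.mem_Ioo] at hm
        rw [if_neg (hndvd _ (by omega) (by rw [abs_lt]; omega)), mul_zero])]
    -- now the integral side
    have h1 : Continuous fun t : ℝ => Complex.exp (Complex.I * t) :=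
      Complex.continuous_exp.comp (continuous_const.mul Complex.continuous_ofReal)
    have hmaps : ∀ t : ℝ, Complex.exp (Complex.I * t) ∈ {z : ℂ | r⁻¹ ≤ ‖z‖ ∧ ‖z‖ ≤ r} := by
      intro t
      have hnorm : ‖Complex.exp (Complex.I * t)‖ = 1 := by
        rw [Complex.norm_exp]
        simp [Complex.mul_re]
      constructor
      · rw [hnorm]
        exact inv_le_one_of_one_le₀ hr.le
      · rw [hnorm]; exact hr.le
    have hKc : Continuous fun t : ℝ => K (Complex.exp (Complex.I * t)) :=
      hK.continuousOn.comp_continuous h1 hmaps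
    have hint : ∀ m : ℤ, IntervalIntegrable
        (fun t : ℝ => K (Complex.exp (Complex.I * t)) * Complex.exp (Complex.I * t) ^ m)
        MeasureTheory.volume 0 (2 * π) := by
      intro m
      exact (hKc.mul (h1.zpow₀ m (fun t => Or.inl (Complex.exp_ne_zero _)))).intervalIntegrable _ _
    have hsp2 : (fun t : ℝ => K (Complex.exp (Complex.I * t)) *
          (Complex.exp (Complex.I * t) ^ (n : ℤ) + Complex.exp (Complex.I * t) ^ (-(n : ℤ))))
        = fun t : ℝ => K (Complex.exp (Complex.I * t)) * Complex.exp (Complex.I * t) ^ (n : ℤ)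
            + K (Complex.exp (Complex.I * t)) * Complex.exp (Complex.I * t) ^ (-(n : ℤ)) :=
      funext fun t => mul_add _ _ _
    rw [hsp2, intervalIntegral.integral_add (hint (n : ℤ)) (hint (-(n : ℤ))), key (n : ℤ),
      key (-(n : ℤ)), neg_neg]
    ring
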